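/- Let A be an n×n real symmetric positive semidefinite matrix with eigenvalues λ₁ ≥ ⋯ ≥ λ_n, let μ > 0, and define the effective dimension d_eff(μ) = ∑_{j=1}^{n} λ_j/(λ_j+μ). If an index k with 1 ≤ k ≤ n satisfies k ≥ d_eff(μ), then (1/k)·∑_{j>k} λ_j ≤ (d_eff(μ)/k)·μ, i.e., ∑_{j=k+1}^{n} λ_j ≤ d_eff(μ)·μ. -/

import Mathlib

open Matrix MeasureTheory ProbabilityTheory
open scoped Classical

/-- Moore–Penrose pseudoinverse (characterized by the four Penrose conditions). -/
noncomputable def pinv {m n : ℕ} (A : Matrix (Fin m) (Fin n) ℝ) : Matrix (Fin n) (Fin m) ℝ :=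
  if h : ∃ B : Matrix (Fin n) (Fin m) ℝ,
      A * B * A = A ∧ B * A * B = B ∧ (A * B)ᵀ = A * B ∧ (B * A)ᵀ = B * A
  then h.choose else 0

/-- Nyström approximation of `A` with respect to the test matrix `X`. -/
noncomputable def nystrom {n l : ℕ} (A : Matrix (Fin n) (Fin n) ℝ)
    (X : Matrix (Fin n) (Fin l) ℝ) : Matrix (Fin n) (Fin n) ℝ :=
  A * X * pinv (Xᵀ * A * X) * (A * X)ᵀ

/-- Spectral (ℓ² operator) norm of a matrix. -/
noncomputable def specNorm {m n : ℕ} (M : Matrix (Fin m) (Fin n) ℝ) : ℝ :=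
  ‖LinearMap.toContinuousLinearMap (Matrix.toEuclideanLin M)‖

/-- Frobenius norm of a matrix. -/
noncomputable def frobNorm {m n : ℕ} (M : Matrix (Fin m) (Fin n) ℝ) : ℝ :=
  Real.sqrt (∑ i, ∑ j, (M i j) ^ 2)

/-- Euclidean norm of a vector. -/
noncomputable def euclNorm {n : ℕ} (x : Fin n → ℝ) : ℝ :=
  Real.sqrt (∑ i, (x i) ^ 2)

/-- Law of an `n × l` random matrix with independent standard normal entries. -/
noncomputable def gaussianEnsemble (n l : ℕ) : Measure (Fin n → Fin l → ℝ) :=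
  Measure.pi fun _ => Measure.pi fun _ => gaussianReal 0 1

/-- The psd square root of a psd matrix (junk value `0` otherwise). -/
noncomputable def matSqrt {n : ℕ} (M : Matrix (Fin n) (Fin n) ℝ) : Matrix (Fin n) (Fin n) ℝ :=
  if hM : M.PosSemidef then
    (hM.1.eigenvectorUnitary : Matrix (Fin n) (Fin n) ℝ) *
      diagonal ((↑) ∘ Real.sqrt ∘ hM.1.eigenvalues) *
      (star (hM.1.eigenvectorUnitary : Matrix (Fin n) (Fin n) ℝ))
  else 0

/-- ℓ² condition number of a symmetric matrix: ratio of the largest to the smallest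
eigenvalue (junk value `0` for non-symmetric matrices). -/
noncomputable def kappa {n : ℕ} (M : Matrix (Fin n) (Fin n) ℝ) : ℝ :=
  if hM : M.IsHermitian then (⨆ i, hM.eigenvalues i) / (⨅ i, hM.eigenvalues i) else 0

/-- If `k ≥ d_eff(μ)` then `∑_{j>k} λ_j ≤ d_eff(μ)·μ`
(1-indexed: the tail `j > k` corresponds to 0-indexed indices `≥ k`). -/
theorem effective_dimension_tail_bound {n : ℕ}
    (A : Matrix (Fin n) (Fin n) ℝ) (hA : A.PosSemidef)
    (lam : Fin n → ℝ) (hanti : Antitone lam)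
    (V : Matrix (Fin n) (Fin n) ℝ) (hV : Vᵀ * V = 1)
    (hdecomp : A = V * Matrix.diagonal lam * Vᵀ)
    (μ : ℝ) (hμ : 0 < μ)
    (k : ℕ) (hk1 : 1 ≤ k) (hkn : k ≤ n)
    (hk : ∑ i, lam i / (lam i + μ) ≤ (k : ℝ)) :
    ∑ j ∈ Finset.univ.filter (fun j : Fin n => k ≤ (j : ℕ)), lam j
      ≤ (∑ i, lam i / (lam i + μ)) * μ := by
  -- eigenvalues are nonnegative
  have hDpsd : (Matrix.diagonal lam).PosSemidef := by
    have h1 : (Vᵀ * A * V).PosSemidef := by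
      have := hA.conjTranspose_mul_mul_same V
      simpa using this
    have h2 : Vᵀ * A * V = Matrix.diagonal lam := by
      rw [hdecomp]
      calc Vᵀ * (V * Matrix.diagonal lam * Vᵀ) * V
          = (Vᵀ * V) * Matrix.diagonal lam * (Vᵀ * V) := by
            simp only [Matrix.mul_assoc]
        _ = Matrix.diagonal lam := by rw [hV]; simp
    rwa [h2] at h1
  have hnn : ∀ j, 0 ≤ lam j := Matrix.posSemidef_diagonal_iff.mp hDpsd
  have hpos : ∀ j, 0 < lam j + μ := fun j => by linarith [hnn j]
  set f : Fin n → ℝ := fun j => lam j / (lam j + μ) with hf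
  have hf0 : ∀ j, 0 ≤ f j := fun j => div_nonneg (hnn j) (hpos j).le
  have hf1 : ∀ j, f j ≤ 1 := fun j => by
    rw [hf]; exact div_le_one_of_le₀ (by linarith) (hpos j).le
  set S₁ := Finset.univ.filter (fun j : Fin n => (j : ℕ) < k) with hS₁
  set S₂ := Finset.univ.filter (fun j : Fin n => k ≤ (j : ℕ)) with hS₂
  have hsplit : ∀ g : Fin n → ℝ, ∑ j, g j = ∑ j ∈ S₁, g j + ∑ j ∈ S₂, g j := by
    intro g
    rw [hS₁, hS₂, ← Finset.sum_filter_add_sum_filter_not Finset.univ (fun j : Fin n => (j : ℕ) < k)]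
    simp [not_lt]
  have hcard : S₁.card = k := by
    have : S₁ = Finset.map (Fin.castLEEmb hkn) Finset.univ := by
      ext j
      simp only [hS₁, Finset.mem_filter, Finset.mem_univ, true_and, Finset.mem_map,
        Fin.castLEEmb_apply]
      constructor
      · intro hj; exact ⟨⟨(j : ℕ), hj⟩, by simp [Fin.castLE]⟩
      · rintro ⟨i, rfl⟩; exact i.isLt
    rw [this, Finset.card_map, Finset.card_univ, Fintype.card_fin]
  -- tail bound on f
  have htail : ∑ j ∈ S₂, f j ≤ ∑ i ∈ S₁, (1 - f i) := by
    have h1 : ∑ i ∈ S₁, f i + ∑ j ∈ S₂, f j ≤ (k : ℝ) := by rw [← hsplit]; exact hk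
    have h2 : ∑ i ∈ S₁, (1 - f i) = (k : ℝ) - ∑ i ∈ S₁, f i := by
      rw [Finset.sum_sub_distrib, Finset.sum_const, hcard]; simp
    linarith
  -- the key pointwise identity
  have hid : ∀ j, lam j = lam j * f j + μ * f j := by
    intro j
    rw [hf]
    field_simp
    rw [eq_div_iff (hpos j).ne']
  rcases Nat.lt_or_ge k n with hkn' | hkn'
  · set c := lam ⟨k, hkn'⟩ with hc
    have hc0 : 0 ≤ c := hnn _
    have hcle : ∀ i ∈ S₁, c ≤ lam i := by
      intro i hi
      rw [hS₁, Finset.mem_filter] at hi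
      exact hanti (by simpa [Fin.le_def] using hi.2.le)
    have hcge : ∀ j ∈ S₂, lam j ≤ c := by
      intro j hj
      rw [hS₂, Finset.mem_filter] at hj
      exact hanti (by simpa [Fin.le_def] using hj.2)
    calc ∑ j ∈ S₂, lam j = ∑ j ∈ S₂, (lam j * f j + μ * f j) := by
          exact Finset.sum_congr rfl fun j _ => hid j
      _ ≤ ∑ j ∈ S₂, (c * f j) + ∑ j ∈ S₂, μ * f j := by
          rw [Finset.sum_add_distrib]
          gcongr with j hj
          · exact hf0 j
          · exact hcge j hj
      _ = c * ∑ j ∈ S₂, f j + μ * ∑ j ∈ S₂, f j := by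
          rw [Finset.mul_sum, Finset.mul_sum]
      _ ≤ c * ∑ i ∈ S₁, (1 - f i) + μ * ∑ j ∈ S₂, f j := by
          gcongr
      _ = ∑ i ∈ S₁, c * (1 - f i) + μ * ∑ j ∈ S₂, f j := by rw [Finset.mul_sum]
      _ ≤ ∑ i ∈ S₁, lam i * (1 - f i) + μ * ∑ j ∈ S₂, f j := by
          gcongr with i hi
          · linarith [hf1 i]
          · exact hcle i hi
      _ = ∑ i ∈ S₁, μ * f i + μ * ∑ j ∈ S₂, f j := by
          refine congrArg (· + _) (Finset.sum_congr rfl fun i _ => ?_)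
          rw [hf]
          field_simp [(hpos i).ne']
          ring
      _ = (∑ i, f i) * μ := by
          rw [hsplit f, ← Finset.mul_sum]
          ring
  · -- k = n : tail is empty
    have hS₂e : S₂ = ∅ := by
      rw [hS₂]
      refine Finset.filter_false_of_mem fun j _ => ?_
      exact not_le.mpr (lt_of_lt_of_le j.isLt hkn')
    rw [hS₂e, Finset.sum_empty]
    exact mul_nonneg (Finset.sum_nonneg fun i _ => hf0 i) hμ.le
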